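/- The FJ model x(k+1) = ΛW x(k) + (I_n − Λ)u is convergent (x(k) has a limit for every u ∈ ℝ^n) if and only if the matrix A = ΛW is regular, i.e. A_* = lim_{k→∞}(ΛW)^k exists. Moreover, when this holds, for every u the series Σ_{k=0}^∞ (ΛW)^k (I_n − Λ)u converges and the limit opinion decomposes as lim_{k→∞} x(k) = A_* u + Σ_{k=0}^∞ (ΛW)^k (I_n − Λ)u. -/

import Mathlib

open Filter

/-- the FJ model x(k+1) = ΛW x(k) + (I-Λ)u is convergent (x(k) has a limit
for every u) iff A = ΛW is regular (A_* = lim A^k exists); moreover, in this case, for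
every u the series Σ (ΛW)^k (I-Λ)u converges and lim x(k) = A_* u + Σ (ΛW)^k (I-Λ)u. -/
theorem fj_convergent_iff_regular {n : ℕ} (W : Matrix (Fin n) (Fin n) ℝ)
    (lam : Fin n → ℝ)
    (hW0 : ∀ i j, 0 ≤ W i j) (hW1 : ∀ i, ∑ j, W i j = 1)
    (hlam : ∀ i, 0 ≤ lam i ∧ lam i ≤ 1) :
    ((∀ u : Fin n → ℝ, ∃ L : Fin n → ℝ,
        Tendsto (fun k => (fun x => (Matrix.diagonal lam * W).mulVec x
            + (1 - Matrix.diagonal lam).mulVec u)^[k] u) atTop (nhds L)) ↔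
      (∃ Astar : Matrix (Fin n) (Fin n) ℝ,
        Tendsto (fun k => (Matrix.diagonal lam * W) ^ k) atTop (nhds Astar))) ∧
    (∀ Astar : Matrix (Fin n) (Fin n) ℝ,
      Tendsto (fun k => (Matrix.diagonal lam * W) ^ k) atTop (nhds Astar) →
      ∀ u : Fin n → ℝ, ∃ s : Fin n → ℝ,
        HasSum (fun k : ℕ => ((Matrix.diagonal lam * W) ^ k).mulVec
            ((1 - Matrix.diagonal lam).mulVec u)) s ∧
        Tendsto (fun k => (fun x => (Matrix.diagonal lam * W).mulVec x
            + (1 - Matrix.diagonal lam).mulVec u)^[k] u) atTop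
          (nhds (Astar.mulVec u + s))) := by
  set A : Matrix (Fin n) (Fin n) ℝ := Matrix.diagonal lam * W with hA
  set B : Matrix (Fin n) (Fin n) ℝ := 1 - Matrix.diagonal lam with hBdef
  -- entries of A
  have hAe : ∀ i j, A i j = lam i * W i j := by
    intro i j; simp [hA, Matrix.diagonal_mul]
  have hA0 : ∀ i j, 0 ≤ A i j := fun i j => by
    rw [hAe]; exact mul_nonneg (hlam i).1 (hW0 i j)
  have hpow0 : ∀ k i j, 0 ≤ (A ^ k) i j := by
    intro k
    induction k with
    | zero =>
      intro i j
      by_cases h : i = j <;> simp [Matrix.one_apply, h]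
    | succ k ih =>
      intro i j
      rw [pow_succ, Matrix.mul_apply]
      exact Finset.sum_nonneg fun l _ => mul_nonneg (ih i l) (hA0 l j)
  have hrowA : ∀ i, ∑ j, A i j = lam i := by
    intro i
    simp only [hAe, ← Finset.mul_sum, hW1 i, mul_one]
  have hr0 : ∀ i, (∑ j, (A ^ 0) i j) = 1 := by
    intro i; simp [Matrix.one_apply]
  have hrsucc : ∀ k i, ∑ j, (A ^ (k + 1)) i j = ∑ l, (A ^ k) i l * lam l := by
    intro k i
    rw [pow_succ]
    simp only [Matrix.mul_apply]
    rw [Finset.sum_comm]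
    refine Finset.sum_congr rfl fun l _ => ?_
    rw [← Finset.mul_sum, hrowA]
  have hrnonneg : ∀ k i, 0 ≤ ∑ j, (A ^ k) i j :=
    fun k i => Finset.sum_nonneg fun j _ => hpow0 k i j
  -- telescoping identity for row sums of A^k (I - Λ)
  have hc_eq : ∀ k i, (∑ j, (A ^ k) i j * (1 - lam j))
      = (∑ j, (A ^ k) i j) - ∑ j, (A ^ (k + 1)) i j := by
    intro k i
    rw [hrsucc, ← Finset.sum_sub_distrib]
    exact Finset.sum_congr rfl fun j _ => by ring
  have hcsum : ∀ i m, ∑ k ∈ Finset.range m, (∑ j, (A ^ k) i j * (1 - lam j))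
      = 1 - ∑ j, (A ^ m) i j := by
    intro i m
    calc ∑ k ∈ Finset.range m, (∑ j, (A ^ k) i j * (1 - lam j))
        = ∑ k ∈ Finset.range m,
            ((∑ j, (A ^ k) i j) - ∑ j, (A ^ (k + 1)) i j) :=
          Finset.sum_congr rfl fun k _ => hc_eq k i
      _ = (∑ j, (A ^ 0) i j) - ∑ j, (A ^ m) i j :=
          Finset.sum_range_sub' (fun k => ∑ j, (A ^ k) i j) m
      _ = 1 - ∑ j, (A ^ m) i j := by rw [hr0]
  have hcnonneg : ∀ k i, 0 ≤ ∑ j, (A ^ k) i j * (1 - lam j) :=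
    fun k i => Finset.sum_nonneg fun j _ =>
      mul_nonneg (hpow0 k i j) (by linarith [(hlam j).2])
  have hcsummable : ∀ i, Summable (fun k => ∑ j, (A ^ k) i j * (1 - lam j)) := by
    intro i
    refine summable_of_sum_range_le (c := 1) (fun k => hcnonneg k i) fun m => ?_
    rw [hcsum]
    linarith [hrnonneg m i]
  -- formula for the terms of the series
  have hb : ∀ (u : Fin n → ℝ) j, (∑ l, B j l * u l) = (1 - lam j) * u j := by
    intro u j
    simp [hBdef, Matrix.sub_apply, Matrix.one_apply, Matrix.diagonal_apply,
      sub_mul, Finset.sum_sub_distrib, ite_mul, Finset.sum_ite_eq]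
  have hterm : ∀ (u : Fin n → ℝ) k i, ((A ^ k).mulVec (B.mulVec u)) i
      = ∑ j, (A ^ k) i j * ((1 - lam j) * u j) := by
    intro u k i
    simp only [Matrix.mulVec, dotProduct]
    exact Finset.sum_congr rfl fun j _ => by rw [hb]
  -- the series Σ A^k (I-Λ) u is always summable
  have hsummable : ∀ u : Fin n → ℝ, Summable (fun k => (A ^ k).mulVec (B.mulVec u)) := by
    intro u
    rw [Pi.summable]
    intro i
    set C : ℝ := ∑ j, |u j| with hC
    have hbig : Summable (fun k => (∑ j, (A ^ k) i j * (1 - lam j)) * C) :=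
      (hcsummable i).mul_right C
    refine Summable.of_abs (Summable.of_nonneg_of_le (fun k => abs_nonneg _) (fun k => ?_) hbig)
    rw [hterm]
    calc |∑ j, (A ^ k) i j * ((1 - lam j) * u j)|
        ≤ ∑ j, |(A ^ k) i j * ((1 - lam j) * u j)| := Finset.abs_sum_le_sum_abs _ _
      _ = ∑ j, ((A ^ k) i j * (1 - lam j)) * |u j| := by
          refine Finset.sum_congr rfl fun j _ => ?_
          have h1 : (0:ℝ) ≤ 1 - lam j := by linarith [(hlam j).2]
          rw [abs_mul, abs_mul, abs_of_nonneg (hpow0 k i j), abs_of_nonneg h1]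
          ring
      _ ≤ ∑ j, (∑ l, (A ^ k) i l * (1 - lam l)) * |u j| := by
          refine Finset.sum_le_sum fun j _ => ?_
          refine mul_le_mul_of_nonneg_right ?_ (abs_nonneg _)
          exact Finset.single_le_sum (f := fun l => (A ^ k) i l * (1 - lam l))
            (fun l _ => mul_nonneg (hpow0 k i l) (by linarith [(hlam l).2]))
            (Finset.mem_univ j)
      _ = (∑ j, (A ^ k) i j * (1 - lam j)) * C := by rw [← Finset.mul_sum]
  -- iterate formula
  have hiter : ∀ (u : Fin n → ℝ) k,
      (fun x => A.mulVec x + B.mulVec u)^[k] u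
      = (A ^ k).mulVec u + ∑ j ∈ Finset.range k, (A ^ j).mulVec (B.mulVec u) := by
    intro u k
    induction k with
    | zero => simp [Matrix.one_mulVec]
    | succ k ih =>
      rw [Function.iterate_succ_apply', ih]
      have hmap : A.mulVec (∑ j ∈ Finset.range k, (A ^ j).mulVec (B.mulVec u))
          = ∑ j ∈ Finset.range k, (A ^ (j + 1)).mulVec (B.mulVec u) := by
        rw [← Matrix.mulVecLin_apply, map_sum]
        refine Finset.sum_congr rfl fun j _ => ?_
        rw [Matrix.mulVecLin_apply, Matrix.mulVec_mulVec, ← pow_succ']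
      rw [Matrix.mulVec_add, hmap, Matrix.mulVec_mulVec, ← pow_succ']
      rw [Finset.sum_range_succ' (fun j => (A ^ j).mulVec (B.mulVec u))]
      simp [add_assoc]
  have hcont : ∀ u : Fin n → ℝ,
      Continuous fun M : Matrix (Fin n) (Fin n) ℝ => M.mulVec u :=
    fun u => continuous_id.matrix_mulVec continuous_const
  -- the key part 2
  have key : ∀ Astar : Matrix (Fin n) (Fin n) ℝ,
      Tendsto (fun k => A ^ k) atTop (nhds Astar) →
      ∀ u : Fin n → ℝ, ∃ s : Fin n → ℝ,
        HasSum (fun k : ℕ => (A ^ k).mulVec (B.mulVec u)) s ∧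
        Tendsto (fun k => (fun x => A.mulVec x + B.mulVec u)^[k] u) atTop
          (nhds (Astar.mulVec u + s)) := by
    intro Astar hAst u
    refine ⟨∑' k, (A ^ k).mulVec (B.mulVec u), (hsummable u).hasSum, ?_⟩
    have h1 : Tendsto (fun k => (A ^ k).mulVec u) atTop (nhds (Astar.mulVec u)) :=
      ((hcont u).tendsto Astar).comp hAst
    have h2 := (hsummable u).hasSum.tendsto_sum_nat
    have h3 := h1.add h2
    refine h3.congr fun k => ?_
    rw [hiter]
  refine ⟨⟨?_, ?_⟩, key⟩
  · -- convergence for all u ⇒ A regular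
    intro hconv
    have hAu : ∀ u : Fin n → ℝ, ∃ Lu : Fin n → ℝ,
        Tendsto (fun k => (A ^ k).mulVec u) atTop (nhds Lu) := by
      intro u
      obtain ⟨L, hL⟩ := hconv u
      have hs := (hsummable u).hasSum.tendsto_sum_nat
      refine ⟨L - ∑' k, (A ^ k).mulVec (B.mulVec u), ?_⟩
      have := hL.sub hs
      refine this.congr fun k => ?_
      rw [hiter]
      abel
    choose Lfun hLfun using fun j => hAu (Pi.single j 1)
    refine ⟨Matrix.of fun i j => Lfun j i, ?_⟩
    refine tendsto_pi_nhds.mpr ?_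
    intro i
    rw [tendsto_pi_nhds]
    intro j
    have := (tendsto_pi_nhds.mp (hLfun j)) i
    refine this.congr fun k => ?_
    simp [Matrix.mulVec, dotProduct, Pi.single_apply, mul_ite, Finset.sum_ite_eq']
  · -- A regular ⇒ convergence for all u
    rintro ⟨Astar, hAst⟩ u
    obtain ⟨s, _, hten⟩ := key Astar hAst u
    exact ⟨Astar.mulVec u + s, hten⟩
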